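/- Let G be a maximal stabilizer group on N qubits with stabilizer state |ψ_G⟩, and let Ĥ be a traceless Hermitian operator. Then Ĥ|ψ_G⟩ = 0 if and only if Ĥ can be written as a linear combination of terms of the form c(P,Q)(P − a_{P,Q}Q), where P, Q range over nonidentity prefactor-1 Pauli strings such that a_{P,Q}·P·Q ∈ G for a phase a_{P,Q} ∈ {±1,±i}. -/

import Mathlib

open Matrix Complex BigOperators
open scoped Classical

noncomputable section

/-- Single-qubit Pauli matrices: I, X, Y, Z. -/
def pauli1 : Fin 4 → Matrix (Fin 2) (Fin 2) ℂ
  | 0 => 1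
  | 1 => !![0, 1; 1, 0]
  | 2 => !![0, -Complex.I; Complex.I, 0]
  | 3 => !![1, 0; 0, -1]

/-- Operators on an N-qubit system with sites indexed by `V`. -/
abbrev QOp (V : Type*) := Matrix (V → Fin 2) (V → Fin 2) ℂ

/-- The prefactor-1 Pauli string with single-site labels `p`. -/
def pauliOp {V : Type*} [Fintype V] (p : V → Fin 4) : QOp V :=
  Matrix.of fun x y => ∏ i, pauli1 (p i) (x i) (y i)

/-- Support of a Pauli string: sites where the tensor factor is not the identity. -/
def psupp {V : Type*} [Fintype V] (p : V → Fin 4) : Finset V :=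
  Finset.univ.filter fun i => p i ≠ 0

/-- Allowed phases of Pauli group elements. -/
def isPhase (a : ℂ) : Prop := a = 1 ∨ a = -1 ∨ a = Complex.I ∨ a = -Complex.I

/-- A maximal stabilizer group on qubits indexed by `V`: an abelian set of
prefactor-`±1` Pauli strings, closed under multiplication, containing `I`,
not containing `-I`, of cardinality `2 ^ |V|`. -/
structure MaxStabilizer (V : Type*) [Fintype V] [DecidableEq V] where
  carrier : Finset (QOp V)
  mem_pauli : ∀ g ∈ carrier, ∃ (c : ℂ) (p : V → Fin 4), (c = 1 ∨ c = -1) ∧ g = c • pauliOp p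
  one_mem : (1 : QOp V) ∈ carrier
  mul_mem : ∀ g ∈ carrier, ∀ h ∈ carrier, g * h ∈ carrier
  mul_comm' : ∀ g ∈ carrier, ∀ h ∈ carrier, g * h = h * g
  neg_one_not_mem : (-1 : QOp V) ∉ carrier
  card_eq : carrier.card = 2 ^ Fintype.card V

/-- `ψ` is the stabilizer state of `G`: a normalized common `+1`-eigenvector of all
elements of `G`. -/
def IsStabState {V : Type*} [Fintype V] [DecidableEq V] (G : MaxStabilizer V)
    (ψ : (V → Fin 2) → ℂ) : Prop :=
  (∀ g ∈ G.carrier, Matrix.mulVec g ψ = ψ) ∧ ∑ x, starRingEnd ℂ (ψ x) * ψ x = 1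

/-- The projector `|ψ⟩⟨ψ|` onto a state `ψ`. -/
def projOf {V : Type*} (ψ : (V → Fin 2) → ℂ) : QOp V :=
  Matrix.vecMulVec ψ fun x => starRingEnd ℂ (ψ x)

/-- Reduced density matrix (partial trace over the complement of `A`). -/
def reduced {V : Type*} [Fintype V] [DecidableEq V] (ρ : QOp V) (A : Finset V) :
    Matrix ({i // i ∈ A} → Fin 2) ({i // i ∈ A} → Fin 2) ℂ :=
  Matrix.of fun a b => ∑ c : {i // i ∉ A} → Fin 2,
    ρ (fun i => if h : i ∈ A then a ⟨i, h⟩ else c ⟨i, h⟩)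
      (fun i => if h : i ∈ A then b ⟨i, h⟩ else c ⟨i, h⟩)

/-- `δ(G)`: minimum support size over nonidentity elements of `G`. -/
def sdelta {V : Type*} [Fintype V] [DecidableEq V] (G : MaxStabilizer V) : ℕ :=
  sInf {k | ∃ (c : ℂ) (p : V → Fin 4), (c = 1 ∨ c = -1) ∧ c • pauliOp p ∈ G.carrier ∧
    c • pauliOp p ≠ 1 ∧ (psupp p).card = k}

def pm (j k : Fin 4) : Fin 4 := ![![0,1,2,3],![1,0,3,2],![2,3,0,1],![3,2,1,0]] j k
def pw (j k : Fin 4) : ℂ :=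
  ![![1,1,1,1],![1,1,Complex.I,-Complex.I],![1,-Complex.I,1,Complex.I],![1,Complex.I,-Complex.I,1]] j k

lemma pauli1_mul (j k : Fin 4) : pauli1 j * pauli1 k = pw j k • pauli1 (pm j k) := by
  fin_cases j <;> fin_cases k <;>
    ext a b <;> fin_cases a <;> fin_cases b <;>
    simp [pauli1, pw, pm, Matrix.mul_apply, Fin.sum_univ_two, Matrix.one_apply,
      Matrix.vecHead, Matrix.vecTail]
lemma pm_self (j : Fin 4) : pm j j = 0 := by revert j; decide
lemma pm_eq_zero_iff {j k : Fin 4} : pm j k = 0 ↔ j = k := by revert j k; decide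
lemma pw_self (j : Fin 4) : pw j j = 1 := by fin_cases j <;> simp [pw]
lemma pw_phase (j k : Fin 4) : pw j k ^ 4 = 1 := by
  have hI : (Complex.I) ^ 4 = 1 := by
    rw [show (4:ℕ) = 2*2 from rfl, pow_mul, Complex.I_sq]; norm_num
  have hnI : (-Complex.I) ^ 4 = 1 := by rw [neg_pow]; norm_num [hI]
  fin_cases j <;> fin_cases k <;>
    simp [pw, Matrix.vecHead, Matrix.vecTail, hI, hnI]
lemma pauli1_conj (j : Fin 4) (a b : Fin 2) :
    starRingEnd ℂ (pauli1 j a b) = pauli1 j b a := by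
  fin_cases j <;> fin_cases a <;> fin_cases b <;> simp [pauli1, Matrix.one_apply]
lemma pauli1_trace (j : Fin 4) : ∑ a, pauli1 j a a = if j = 0 then 2 else 0 := by
  fin_cases j <;> simp [pauli1, Fin.sum_univ_two, Matrix.one_apply]
lemma pauli1_complete (a b c d : Fin 2) :
    ∑ k, pauli1 k a b * pauli1 k c d = if a = d ∧ b = c then 2 else 0 := by
  fin_cases a <;> fin_cases b <;> fin_cases c <;> fin_cases d <;>
    simp [pauli1, Fin.sum_univ_four, Matrix.one_apply] <;> ring_nf <;>
    simp [Complex.I_sq]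

section V
variable {V : Type*} [Fintype V] [DecidableEq V]

lemma prod_if_two {P : V → Prop} [DecidablePred P] :
    (∏ i, (if P i then (2:ℂ) else 0)) = if ∀ i, P i then (2:ℂ) ^ Fintype.card V else 0 := by
  by_cases h : ∀ i, P i
  · simp [h]
  · push_neg at h
    obtain ⟨i, hi⟩ := h
    rw [if_neg (by push_neg; exact ⟨i, hi⟩)]
    exact Finset.prod_eq_zero (Finset.mem_univ i) (by simp [hi])

lemma pauliOp_mul (p q : V → Fin 4) :
    pauliOp p * pauliOp q
      = (∏ i, pw (p i) (q i)) • pauliOp (fun i => pm (p i) (q i)) := by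
  ext x y
  simp only [Matrix.mul_apply, pauliOp, Matrix.of_apply, Matrix.smul_apply, smul_eq_mul]
  calc ∑ z : V → Fin 2, (∏ i, pauli1 (p i) (x i) (z i)) * ∏ i, pauli1 (q i) (z i) (y i)
      = ∑ z : V → Fin 2, ∏ i, (pauli1 (p i) (x i) (z i) * pauli1 (q i) (z i) (y i)) := by
        simp [Finset.prod_mul_distrib]
    _ = ∏ i, ∑ t : Fin 2, pauli1 (p i) (x i) t * pauli1 (q i) t (y i) := by
        rw [Finset.prod_univ_sum, Fintype.piFinset_univ]
    _ = ∏ i, (pauli1 (p i) * pauli1 (q i)) (x i) (y i) := by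
        simp [Matrix.mul_apply]
    _ = ∏ i, (pw (p i) (q i) * pauli1 (pm (p i) (q i)) (x i) (y i)) := by
        simp_rw [pauli1_mul, Matrix.smul_apply, smul_eq_mul]
    _ = (∏ i, pw (p i) (q i)) * ∏ i, pauli1 (pm (p i) (q i)) (x i) (y i) := by
        rw [Finset.prod_mul_distrib]

lemma pauliOp_zero : pauliOp (fun _ => (0 : Fin 4)) = (1 : QOp V) := by
  ext x y
  simp [pauliOp, pauli1, Matrix.one_apply, Finset.prod_boole, funext_iff]

lemma pauliOp_sq (p : V → Fin 4) : pauliOp p * pauliOp p = 1 := by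
  rw [pauliOp_mul]
  simp [pw_self, pm_self, pauliOp_zero]

lemma pauliOp_conjT (p : V → Fin 4) : (pauliOp p)ᴴ = pauliOp p := by
  ext x y
  simp only [Matrix.conjTranspose_apply, pauliOp, Matrix.of_apply, star_def, map_prod,
    pauli1_conj]

lemma pauliOp_trace (p : V → Fin 4) :
    (pauliOp p).trace = if p = (fun _ => 0) then (2:ℂ) ^ Fintype.card V else 0 := by
  unfold Matrix.trace
  calc ∑ x : V → Fin 2, (pauliOp p).diag x
      = ∏ i, ∑ t : Fin 2, pauli1 (p i) t t := by
        rw [Finset.prod_univ_sum, Fintype.piFinset_univ]; rfl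
    _ = ∏ i, (if p i = 0 then (2:ℂ) else 0) := Finset.prod_congr rfl fun i _ => pauli1_trace (p i)
    _ = _ := by rw [prod_if_two]; simp [funext_iff]

lemma pauliOp_expand (M : QOp V) :
    M = ∑ p : V → Fin 4,
      (((2:ℂ) ^ Fintype.card V)⁻¹ * (pauliOp p * M).trace) • pauliOp p := by
  have c0 : ((2:ℂ) ^ Fintype.card V) ≠ 0 := pow_ne_zero _ two_ne_zero
  ext u v
  rw [Matrix.sum_apply]
  have key : ∀ x y : V → Fin 2,
      (∑ p : V → Fin 4, (∏ i, pauli1 (p i) (x i) (y i)) * ∏ i, pauli1 (p i) (u i) (v i))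
        = if x = v ∧ y = u then (2:ℂ) ^ Fintype.card V else 0 := by
    intro x y
    calc ∑ p : V → Fin 4, (∏ i, pauli1 (p i) (x i) (y i)) * ∏ i, pauli1 (p i) (u i) (v i)
        = ∑ p : V → Fin 4, ∏ i, (pauli1 (p i) (x i) (y i) * pauli1 (p i) (u i) (v i)) := by
          simp [Finset.prod_mul_distrib]
      _ = ∏ i, ∑ k : Fin 4, pauli1 k (x i) (y i) * pauli1 k (u i) (v i) := by
          rw [Finset.prod_univ_sum, Fintype.piFinset_univ]
      _ = ∏ i, (if x i = v i ∧ y i = u i then (2:ℂ) else 0) := by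
          simp [pauli1_complete]
      _ = _ := by rw [prod_if_two]; simp [funext_iff, forall_and]
  have step1 : ∀ p : V → Fin 4,
      ((((2:ℂ) ^ Fintype.card V)⁻¹ * (pauliOp p * M).trace) • pauliOp p) u v
        = ∑ x : V → Fin 2, ∑ y : V → Fin 2, ((2:ℂ) ^ Fintype.card V)⁻¹ *
            (M y x * ((∏ i, pauli1 (p i) (x i) (y i)) * ∏ i, pauli1 (p i) (u i) (v i))) := by
    intro p
    simp only [Matrix.smul_apply, smul_eq_mul, Matrix.trace, Matrix.diag, Matrix.mul_apply,
      pauliOp, Matrix.of_apply]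
    rw [Finset.mul_sum, Finset.sum_mul]
    refine Finset.sum_congr rfl fun x _ => ?_
    rw [Finset.mul_sum, Finset.sum_mul]
    refine Finset.sum_congr rfl fun y _ => ?_
    ring
  symm
  calc ∑ p : V → Fin 4, ((((2:ℂ) ^ Fintype.card V)⁻¹ * (pauliOp p * M).trace) • pauliOp p) u v
      = ∑ p : V → Fin 4, ∑ x : V → Fin 2, ∑ y : V → Fin 2, ((2:ℂ) ^ Fintype.card V)⁻¹ *
          (M y x * ((∏ i, pauli1 (p i) (x i) (y i)) * ∏ i, pauli1 (p i) (u i) (v i))) :=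
        Finset.sum_congr rfl fun p _ => step1 p
    _ = ∑ x : V → Fin 2, ∑ p : V → Fin 4, ∑ y : V → Fin 2, _ := Finset.sum_comm
    _ = ∑ x : V → Fin 2, ∑ y : V → Fin 2, ∑ p : V → Fin 4, ((2:ℂ) ^ Fintype.card V)⁻¹ *
          (M y x * ((∏ i, pauli1 (p i) (x i) (y i)) * ∏ i, pauli1 (p i) (u i) (v i))) :=
        Finset.sum_congr rfl fun x _ => Finset.sum_comm
    _ = ∑ x : V → Fin 2, ∑ y : V → Fin 2, ((2:ℂ) ^ Fintype.card V)⁻¹ *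
          (M y x * (if x = v ∧ y = u then (2:ℂ) ^ Fintype.card V else 0)) := by
        refine Finset.sum_congr rfl fun x _ => Finset.sum_congr rfl fun y _ => ?_
        rw [← Finset.mul_sum, ← Finset.mul_sum, key]
    _ = M u v := by
        simp only [mul_ite, mul_zero, ite_and]
        rw [Finset.sum_comm]
        simp [Finset.sum_ite_eq]
        field_simp
end V

section Stab
variable {V : Type*} [Fintype V] [DecidableEq V]

lemma isPhase_iff_pow4 {a : ℂ} : isPhase a ↔ a ^ 4 = 1 := by
  constructor
  · have hI : (Complex.I) ^ 4 = 1 := by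
      rw [show (4:ℕ) = 2*2 from rfl, pow_mul, Complex.I_sq]; norm_num
    have hnI : (-Complex.I) ^ 4 = 1 := by rw [neg_pow]; norm_num [hI]
    rintro (rfl|rfl|rfl|rfl) <;> norm_num [hI, hnI]
  · intro h
    have h2 : (a ^ 2 - 1) * (a ^ 2 + 1) = 0 := by linear_combination h
    rcases mul_eq_zero.1 h2 with h2 | h2
    · have h3 : (a - 1) * (a + 1) = 0 := by linear_combination h2
      rcases mul_eq_zero.1 h3 with h4 | h4
      · exact Or.inl (by linear_combination h4)
      · exact Or.inr (Or.inl (by linear_combination h4))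
    · have h3 : (a - Complex.I) * (a + Complex.I) = 0 := by
        linear_combination h2 - Complex.I_sq
      rcases mul_eq_zero.1 h3 with h4 | h4
      · exact Or.inr (Or.inr (Or.inl (by linear_combination h4)))
      · exact Or.inr (Or.inr (Or.inr (by linear_combination h4)))

lemma isPhase_conj {a : ℂ} (h : isPhase a) : isPhase (starRingEnd ℂ a) := by
  rw [isPhase_iff_pow4] at h ⊢
  rw [← map_pow, h, _root_.map_one]

lemma isPhase_mul_conj {a : ℂ} (h : isPhase a) : starRingEnd ℂ a * a = 1 := by
  rcases h with rfl|rfl|rfl|rfl <;> simp [Complex.mul_conj] <;> norm_num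

lemma isPhase_ne_zero {a : ℂ} (h : isPhase a) : a ≠ 0 := by
  rcases h with rfl|rfl|rfl|rfl <;> simp [Complex.I_ne_zero]

/-- helper: a matrix sum applied to a vector -/
lemma sum_mulVec {ι : Type*} (s : Finset ι) (A : ι → QOp V) (v : (V → Fin 2) → ℂ) :
    (∑ i ∈ s, A i).mulVec v = ∑ i ∈ s, (A i).mulVec v := by
  ext x
  rw [Finset.sum_apply]
  simp only [Matrix.mulVec, dotProduct, Matrix.sum_apply, Finset.sum_mul]
  rw [Finset.sum_comm]

lemma trace_mul_proj (A : QOp V) (ψ : (V → Fin 2) → ℂ) :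
    (A * projOf ψ).trace = ∑ x, starRingEnd ℂ (ψ x) * A.mulVec ψ x := by
  simp only [Matrix.trace, Matrix.diag, Matrix.mul_apply, projOf, Matrix.vecMulVec_apply,
    Matrix.mulVec, dotProduct, Finset.mul_sum]
  refine Finset.sum_congr rfl fun x _ => Finset.sum_congr rfl fun y _ => by ring

variable (G : MaxStabilizer V)

lemma mem_sq {g : QOp V} (hg : g ∈ G.carrier) : g * g = 1 := by
  obtain ⟨c, p, hc, rfl⟩ := G.mem_pauli g hg
  rw [smul_mul_assoc, mul_smul_comm, smul_smul, pauliOp_sq]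
  rcases hc with rfl | rfl <;> norm_num

lemma mem_conjT {g : QOp V} (hg : g ∈ G.carrier) : gᴴ = g := by
  obtain ⟨c, p, hc, rfl⟩ := G.mem_pauli g hg
  rw [Matrix.conjTranspose_smul, pauliOp_conjT]
  rcases hc with rfl | rfl <;> norm_num

lemma mem_trace {g : QOp V} (hg : g ∈ G.carrier) (hne : g ≠ 1) : g.trace = 0 := by
  obtain ⟨c, p, hc, rfl⟩ := G.mem_pauli g hg
  have hp : p ≠ fun _ => 0 := by
    rintro rfl
    rw [pauliOp_zero] at hne hg
    rcases hc with rfl | rfl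
    · exact hne (one_smul _ _)
    · rw [neg_smul, one_smul] at hg
      exact G.neg_one_not_mem hg
  rw [Matrix.trace_smul, pauliOp_trace, if_neg hp, smul_zero]

/-- The group-average projector. -/
def stabProj : QOp V := ((2:ℂ) ^ Fintype.card V)⁻¹ • ∑ g ∈ G.carrier, g

lemma two_pow_ne : ((2:ℂ) ^ Fintype.card V) ≠ 0 := pow_ne_zero _ two_ne_zero

lemma stab_reindex {g : QOp V} (hg : g ∈ G.carrier) :
    ∑ h ∈ G.carrier, g * h = ∑ h ∈ G.carrier, h := by
  refine Finset.sum_nbij' (fun h => g * h) (fun h => g * h) ?_ ?_ ?_ ?_ ?_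
  · intro h hh; exact G.mul_mem g hg h hh
  · intro h hh; exact G.mul_mem g hg h hh
  · intro h hh; show g * (g * h) = h; rw [← mul_assoc, mem_sq G hg, one_mul]
  · intro h hh; show g * (g * h) = h; rw [← mul_assoc, mem_sq G hg, one_mul]
  · intro h hh; rfl

lemma card_smul_eq : ((G.carrier.card : ℂ)) = (2:ℂ) ^ Fintype.card V := by
  rw [G.card_eq]; push_cast; ring

lemma stabProj_idem : stabProj G * stabProj G = stabProj G := by
  unfold stabProj
  rw [smul_mul_assoc, mul_smul_comm, smul_smul, Finset.sum_mul_sum]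
  have : ∑ g ∈ G.carrier, ∑ h ∈ G.carrier, g * h = ∑ g ∈ G.carrier, ∑ h ∈ G.carrier, h :=
    Finset.sum_congr rfl fun g hg => stab_reindex G hg
  rw [this, Finset.sum_const, ← Nat.cast_smul_eq_nsmul ℂ, card_smul_eq, smul_smul]
  congr 1
  field_simp

lemma stabProj_conjT : (stabProj G)ᴴ = stabProj G := by
  unfold stabProj
  rw [Matrix.conjTranspose_smul, Matrix.conjTranspose_sum]
  congr 1
  · simp
  · exact Finset.sum_congr rfl fun g hg => mem_conjT G hg

lemma stabProj_trace : (stabProj G).trace = 1 := by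
  unfold stabProj
  rw [Matrix.trace_smul, Matrix.trace_sum]
  rw [Finset.sum_eq_single_of_mem 1 G.one_mem (fun g hg hne => mem_trace G hg hne)]
  rw [Matrix.trace_one]
  simp only [smul_eq_mul]
  rw [show (Fintype.card (V → Fin 2) : ℂ) = (2:ℂ) ^ Fintype.card V by
    rw [Fintype.card_fun, Fintype.card_fin]; push_cast; ring]
  field_simp

section Psi
variable (ψ : (V → Fin 2) → ℂ)

lemma stabProj_mulVec (hψ : IsStabState G ψ) : (stabProj G).mulVec ψ = ψ := by
  unfold stabProj
  rw [Matrix.smul_mulVec, _root_.sum_mulVec]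
  rw [Finset.sum_congr rfl fun g hg => hψ.1 g hg, Finset.sum_const,
    ← Nat.cast_smul_eq_nsmul ℂ, card_smul_eq, smul_smul]
  rw [inv_mul_cancel₀ (two_pow_ne (V := V)), one_smul]

lemma norm_sum (hψ : IsStabState G ψ) : ∑ x, ψ x * starRingEnd ℂ (ψ x) = 1 := by
  rw [← hψ.2]; exact Finset.sum_congr rfl fun x _ => by ring

lemma proj_mulVec (hψ : IsStabState G ψ) : (projOf ψ).mulVec ψ = ψ := by
  ext x
  simp only [Matrix.mulVec, dotProduct, projOf, Matrix.vecMulVec_apply]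
  calc ∑ y, ψ x * starRingEnd ℂ (ψ y) * ψ y = ψ x * ∑ y, starRingEnd ℂ (ψ y) * ψ y := by
        rw [Finset.mul_sum]; exact Finset.sum_congr rfl fun y _ => by ring
    _ = ψ x := by rw [hψ.2, mul_one]

lemma proj_conjT : (projOf ψ)ᴴ = projOf ψ := by
  ext x y
  simp only [Matrix.conjTranspose_apply, projOf, Matrix.vecMulVec_apply, star_def, _root_.map_mul,
    Complex.conj_conj]
  ring

lemma proj_trace (hψ : IsStabState G ψ) : (projOf ψ).trace = 1 := by
  simp only [Matrix.trace, Matrix.diag, projOf, Matrix.vecMulVec_apply]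
  rw [← norm_sum G ψ hψ]

/-- The key structural fact: the projector onto the stabilizer state is the group average. -/
lemma proj_eq_stabProj (hψ : IsStabState G ψ) : projOf ψ = stabProj G := by
  set Pp := stabProj G with hPp0
  set ρ := projOf ψ with hρ
  have hPpRho : Pp * ρ = ρ := by
    ext x y
    simp only [Matrix.mul_apply, hρ, projOf, Matrix.vecMulVec_apply]
    calc ∑ z, Pp x z * (ψ z * starRingEnd ℂ (ψ y))
        = (∑ z, Pp x z * ψ z) * starRingEnd ℂ (ψ y) := by
          rw [Finset.sum_mul]; exact Finset.sum_congr rfl fun z _ => by ring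
      _ = ψ x * starRingEnd ℂ (ψ y) := by
          have := congrFun (stabProj_mulVec G ψ hψ) x
          simp only [Matrix.mulVec, dotProduct] at this
          rw [this]
  have hRhoPp : ρ * Pp = ρ := by
    ext x y
    simp only [Matrix.mul_apply, hρ, projOf, Matrix.vecMulVec_apply]
    have key : ∑ z, starRingEnd ℂ (ψ z) * Pp z y = starRingEnd ℂ (ψ y) := by
      have h1 : ∀ z, Pp z y = starRingEnd ℂ (Pp y z) := by
        intro z
        have h0 := congrFun (congrFun (stabProj_conjT G) z) y
        simp only [Matrix.conjTranspose_apply, star_def] at h0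
        exact h0.symm
      calc ∑ z, starRingEnd ℂ (ψ z) * Pp z y
          = starRingEnd ℂ (∑ z, ψ z * Pp y z) := by
            rw [map_sum]
            refine Finset.sum_congr rfl fun z _ => ?_
            rw [show (starRingEnd ℂ) (ψ z * Pp y z)
                = (starRingEnd ℂ) (ψ z) * (starRingEnd ℂ) (Pp y z) from map_mul _ _ _, ← h1 z]
        _ = starRingEnd ℂ ((Pp.mulVec ψ) y) := by
            congr 1
            simp only [Matrix.mulVec, dotProduct]
            exact Finset.sum_congr rfl fun z _ => by ring
        _ = starRingEnd ℂ (ψ y) := by rw [stabProj_mulVec G ψ hψ]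
    calc ∑ z, ψ x * starRingEnd ℂ (ψ z) * Pp z y
        = ψ x * ∑ z, starRingEnd ℂ (ψ z) * Pp z y := by
          rw [Finset.mul_sum]; exact Finset.sum_congr rfl fun z _ => by ring
      _ = ψ x * starRingEnd ℂ (ψ y) := by rw [key]
  have hρρ : ρ * ρ = ρ := by
    ext x y
    simp only [Matrix.mul_apply, hρ, projOf, Matrix.vecMulVec_apply]
    calc ∑ z, ψ x * starRingEnd ℂ (ψ z) * (ψ z * starRingEnd ℂ (ψ y))
        = (ψ x * starRingEnd ℂ (ψ y)) * ∑ z, starRingEnd ℂ (ψ z) * ψ z := by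
          rw [Finset.mul_sum]; exact Finset.sum_congr rfl fun z _ => by ring
      _ = ψ x * starRingEnd ℂ (ψ y) := by rw [hψ.2, mul_one]
  set M := Pp - ρ with hM
  have hMM : M * M = M := by
    rw [hM, Matrix.sub_mul, Matrix.mul_sub, Matrix.mul_sub, stabProj_idem, hPpRho, hRhoPp, hρρ]
    abel
  have hMH : Mᴴ = M := by
    rw [hM, Matrix.conjTranspose_sub, stabProj_conjT, proj_conjT]
  have hMtr : M.trace = 0 := by
    rw [hM, Matrix.trace_sub, stabProj_trace, proj_trace G ψ hψ, sub_self]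
  have hM0 : M = 0 := by
    have h1 : (M * M).trace = 0 := by rw [hMM, hMtr]
    have h2 : (M * M).trace = ∑ x, ∑ y, (Complex.normSq (M x y) : ℂ) := by
      simp only [Matrix.trace, Matrix.diag, Matrix.mul_apply]
      refine Finset.sum_congr rfl fun x _ => Finset.sum_congr rfl fun y _ => ?_
      have : M y x = starRingEnd ℂ (M x y) := by
        conv_lhs => rw [← hMH]
        simp [Matrix.conjTranspose_apply, star_def]
      rw [this, Complex.mul_conj]
    have h3 : ∑ x, ∑ y, Complex.normSq (M x y) = 0 := by
      have h4 : (∑ x, ∑ y, (Complex.normSq (M x y) : ℂ)) = 0 := by rw [← h2, h1]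
      exact_mod_cast h4
    ext x y
    have hx : ∀ x ∈ (Finset.univ : Finset (V → Fin 2)),
        (∑ y, Complex.normSq (M x y)) = 0 := by
      intro x _
      have h4 := (Finset.sum_eq_zero_iff_of_nonneg (fun i _ =>
        Finset.sum_nonneg fun j _ => Complex.normSq_nonneg _)).1 h3
      exact h4 x (Finset.mem_univ x)
    have h5 := (Finset.sum_eq_zero_iff_of_nonneg (fun j _ => Complex.normSq_nonneg _)).1
      (hx x (Finset.mem_univ x)) y (Finset.mem_univ y)
    simpa [Complex.normSq_eq_zero] using h5
  rw [← sub_eq_zero]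
  rw [hM] at hM0
  rw [← neg_sub, hM0, neg_zero]

end Psi
end Stab

section Rel
variable {V : Type*} [Fintype V] [DecidableEq V] (G : MaxStabilizer V)

lemma pm_comm (j k : Fin 4) : pm j k = pm k j := by revert j k; decide

/-- relation: two nonidentity Pauli strings are related iff their product is in `G`
up to phase. -/
def prel (p q : {f : V → Fin 4 // f ≠ fun _ => 0}) : Prop :=
  ∃ b : ℂ, isPhase b ∧ b • (pauliOp p.1 * pauliOp q.1) ∈ G.carrier

lemma prel_refl (p : {f : V → Fin 4 // f ≠ fun _ => 0}) : prel G p p :=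
  ⟨1, Or.inl rfl, by rw [pauliOp_sq, one_smul]; exact G.one_mem⟩

lemma prel_symm {p q : {f : V → Fin 4 // f ≠ fun _ => 0}} (h : prel G p q) : prel G q p := by
  obtain ⟨b, hb, hg⟩ := h
  refine ⟨starRingEnd ℂ b, isPhase_conj hb, ?_⟩
  have h1 := mem_conjT G hg
  rw [Matrix.conjTranspose_smul, Matrix.conjTranspose_mul, pauliOp_conjT, pauliOp_conjT] at h1
  rw [show (star b : ℂ) = starRingEnd ℂ b from rfl] at h1
  rw [h1]
  exact hg

lemma prel_trans {p q r : {f : V → Fin 4 // f ≠ fun _ => 0}}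
    (h1 : prel G p q) (h2 : prel G q r) : prel G p r := by
  obtain ⟨b, hb, hbg⟩ := h1
  obtain ⟨d, hd, hdg⟩ := h2
  refine ⟨b * d, ?_, ?_⟩
  · rw [isPhase_iff_pow4] at hb hd ⊢
    rw [mul_pow, hb, hd, one_mul]
  · have := G.mul_mem _ hbg _ hdg
    have heq : (b • (pauliOp p.1 * pauliOp q.1)) * (d • (pauliOp q.1 * pauliOp r.1))
        = (b * d) • (pauliOp p.1 * pauliOp r.1) := by
      rw [smul_mul_assoc, mul_smul_comm, smul_smul]
      congr 1
      rw [mul_assoc, ← mul_assoc (pauliOp q.1), pauliOp_sq, one_mul]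
    rwa [heq] at this

def psetoid : Setoid {f : V → Fin 4 // f ≠ fun _ => 0} :=
  ⟨prel G, ⟨prel_refl G, prel_symm G, prel_trans G⟩⟩

/-- representative of the class of `p`. -/
def prep (p : {f : V → Fin 4 // f ≠ fun _ => 0}) : {f : V → Fin 4 // f ≠ fun _ => 0} :=
  (@Quotient.mk _ (psetoid G) p).out

lemma prep_rel (p : {f : V → Fin 4 // f ≠ fun _ => 0}) : prel G (prep G p) p :=
  @Quotient.exact _ (psetoid G) _ _ (@Quotient.out_eq _ (psetoid G) (@Quotient.mk _ (psetoid G) p))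

lemma prep_eq_of_rel {p q : {f : V → Fin 4 // f ≠ fun _ => 0}} (h : prel G p q) :
    prep G p = prep G q :=
  congrArg Quotient.out (@Quotient.sound _ (psetoid G) _ _ h)

lemma prep_idem (p : {f : V → Fin 4 // f ≠ fun _ => 0}) : prep G (prep G p) = prep G p :=
  prep_eq_of_rel G (prep_rel G p)

variable (ψ : (V → Fin 2) → ℂ)

/-- Lemma B: the overlap equals the phase when the product is in `G` up to phase. -/
lemma overlap_eq_phase (hψ : IsStabState G ψ) {P Q : V → Fin 4} {b : ℂ} (hb : isPhase b)
    (hg : b • (pauliOp P * pauliOp Q) ∈ G.carrier) :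
    (pauliOp Q * pauliOp P * projOf ψ).trace = b := by
  have h1 := mem_conjT G hg
  rw [Matrix.conjTranspose_smul, Matrix.conjTranspose_mul, pauliOp_conjT, pauliOp_conjT] at h1
  -- h1 : star b • (pauliOp Q * pauliOp P) = b • (pauliOp P * pauliOp Q)
  have h2 : pauliOp Q * pauliOp P = b • (b • (pauliOp P * pauliOp Q)) := by
    have h3 := congrArg (fun M => b • M) h1
    rw [smul_smul, show (star b : ℂ) = starRingEnd ℂ b from rfl,
      mul_comm b, isPhase_mul_conj hb, one_smul] at h3
    rw [← h3]
  rw [h2, smul_mul_assoc, Matrix.trace_smul, smul_eq_mul]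
  have h4 : ((b • (pauliOp P * pauliOp Q)) * projOf ψ).trace = 1 := by
    rw [trace_mul_proj, Finset.sum_congr rfl fun x _ => by rw [hψ.1 _ hg]]
    exact hψ.2
  rw [h4, mul_one]

/-- Lemma A: if the overlap is nonzero then the product is in `G` up to phase. -/
lemma overlap_ne_zero (hψ : IsStabState G ψ) {P Q : V → Fin 4}
    (h : (pauliOp Q * pauliOp P * projOf ψ).trace ≠ 0) :
    ∃ b : ℂ, isPhase b ∧ b • (pauliOp P * pauliOp Q) ∈ G.carrier := by
  rw [proj_eq_stabProj G ψ hψ] at h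
  unfold stabProj at h
  rw [mul_smul_comm, Matrix.trace_smul, Matrix.mul_sum, Matrix.trace_sum] at h
  have h5 : ∃ g ∈ G.carrier, ((pauliOp Q * pauliOp P) * g).trace ≠ 0 := by
    by_contra hc
    push_neg at hc
    rw [Finset.sum_eq_zero fun g hg => hc g hg] at h
    simp at h
  obtain ⟨g, hgmem, hgne⟩ := h5
  obtain ⟨cg, p, hcg, rfl⟩ := G.mem_pauli g hgmem
  rw [pauliOp_mul] at hgne
  set s : ℂ := ∏ i, pw (Q i) (P i) with hs
  set r : V → Fin 4 := fun i => pm (Q i) (P i) with hr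
  rw [smul_mul_assoc, mul_smul_comm, Matrix.trace_smul, Matrix.trace_smul, pauliOp_mul,
    Matrix.trace_smul, pauliOp_trace] at hgne
  have hrp : r = p := by
    by_contra hne
    apply hgne
    rw [if_neg ?_]
    · simp
    · intro hfun
      apply hne
      funext i
      have := congrFun hfun i
      exact pm_eq_zero_iff.mp this
  -- now pauliOp Q * pauliOp P = s • pauliOp p
  have hQP : pauliOp Q * pauliOp P = s • pauliOp p := by
    rw [pauliOp_mul, ← hs, ← hr, hrp]
  -- pauliOp P * pauliOp Q = s' • pauliOp p with s' = ∏ pw (P i) (Q i)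
  have hPQ : pauliOp P * pauliOp Q = (∏ i, pw (P i) (Q i)) • pauliOp p := by
    have hc : (fun i => pm (P i) (Q i)) = fun i => pm (Q i) (P i) :=
      funext fun i => pm_comm (P i) (Q i)
    rw [pauliOp_mul, hc, ← hr, hrp]
  set s' : ℂ := ∏ i, pw (P i) (Q i) with hs'
  have hs'4 : s' ^ 4 = 1 := by
    rw [hs', ← Finset.prod_pow]
    exact Finset.prod_eq_one fun i _ => pw_phase (P i) (Q i)
  have hs'ne : s' ≠ 0 := by
    intro h0
    rw [h0] at hs'4
    norm_num at hs'4
  refine ⟨cg * s'⁻¹, ?_, ?_⟩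
  · rw [isPhase_iff_pow4, mul_pow, inv_pow, hs'4, inv_one, mul_one]
    rcases hcg with rfl | rfl <;> norm_num
  · have : (cg * s'⁻¹) • (pauliOp P * pauliOp Q) = cg • pauliOp p := by
      rw [hPQ, smul_smul, mul_assoc, inv_mul_cancel₀ hs'ne, mul_one]
    rw [this]
    exact hgmem

/-- class sums vanish when `H` annihilates `ψ`. -/
lemma class_sum_zero (hψ : IsStabState G ψ) (H : QOp V) (hH : H.mulVec ψ = 0)
    (R : V → Fin 4) :
    ∑ P : V → Fin 4, (((2:ℂ) ^ Fintype.card V)⁻¹ * (pauliOp P * H).trace) *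
      (pauliOp R * pauliOp P * projOf ψ).trace = 0 := by
  have hexp := pauliOp_expand H
  calc ∑ P : V → Fin 4, (((2:ℂ) ^ Fintype.card V)⁻¹ * (pauliOp P * H).trace) *
        (pauliOp R * pauliOp P * projOf ψ).trace
      = (pauliOp R * H * projOf ψ).trace := by
        conv_rhs => rw [hexp]
        rw [Matrix.mul_sum, Matrix.sum_mul, Matrix.trace_sum]
        refine Finset.sum_congr rfl fun P _ => ?_
        rw [mul_smul_comm, smul_mul_assoc, Matrix.trace_smul, smul_eq_mul]
    _ = 0 := by
        rw [trace_mul_proj]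
        have : (pauliOp R * H).mulVec ψ = 0 := by
          rw [← Matrix.mulVec_mulVec, hH, Matrix.mulVec_zero]
        rw [this]
        simp
end Rel

/-- a traceless Hermitian `Ĥ` annihilates the stabilizer state iff it is a
linear combination of terms `c(P,Q)·(P - a_{P,Q}·Q)` with `P, Q` nonidentity prefactor-1
Pauli strings and `a_{P,Q}` a phase such that `a_{P,Q}·P·Q ∈ G`. -/
theorem stmt6 (N : ℕ) (G : MaxStabilizer (Fin N)) (ψ : (Fin N → Fin 2) → ℂ)
    (hψ : IsStabState G ψ) (H : QOp (Fin N)) (htr : H.trace = 0) (hherm : H.IsHermitian) :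
    H.mulVec ψ = 0 ↔
    ∃ a c : (Fin N → Fin 4) → (Fin N → Fin 4) → ℂ,
      (∀ P Q, c P Q ≠ 0 → P ≠ (fun _ => 0) ∧ Q ≠ (fun _ => 0) ∧ isPhase (a P Q) ∧
        a P Q • (pauliOp P * pauliOp Q) ∈ G.carrier) ∧
      H = ∑ P : Fin N → Fin 4, ∑ Q : Fin N → Fin 4,
        c P Q • (pauliOp P - a P Q • pauliOp Q) := by
  classical
  constructor
  · intro hH0
    set co : (Fin N → Fin 4) → ℂ :=
      fun p => ((2:ℂ) ^ Fintype.card (Fin N))⁻¹ * (pauliOp p * H).trace with hco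
    have hexp : H = ∑ p : Fin N → Fin 4, co p • pauliOp p := pauliOp_expand H
    have hco0 : co (fun _ => 0) = 0 := by
      show ((2:ℂ) ^ Fintype.card (Fin N))⁻¹ * (pauliOp (fun _ => (0 : Fin 4)) * H).trace = 0
      rw [pauliOp_zero, one_mul, htr, mul_zero]
    set aa : (Fin N → Fin 4) → (Fin N → Fin 4) → ℂ :=
      fun P Q => (pauliOp Q * pauliOp P * projOf ψ).trace with haa
    set cc : (Fin N → Fin 4) → (Fin N → Fin 4) → ℂ :=
      fun P Q => if h : P = (fun _ => 0) then 0
        else if Q = (prep G ⟨P, h⟩).1 then co P else 0 with hcc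
    have hcc_ne : ∀ P Q, cc P Q ≠ 0 →
        ∃ h : P ≠ (fun _ => 0), Q = (prep G ⟨P, h⟩).1 ∧ cc P Q = co P := by
      intro P Q hne
      by_cases hP : P = (fun _ => 0)
      · exact absurd (by simp [hcc, hP]) hne
      by_cases hQ : Q = (prep G ⟨P, hP⟩).1
      · exact ⟨hP, hQ, by simp [hcc, hP, hQ]⟩
      · exact absurd (by simp [hcc, hP, hQ]) hne
    refine ⟨aa, cc, ?_, ?_⟩
    · intro P Q hne
      obtain ⟨hP, hQ, -⟩ := hcc_ne P Q hne
      obtain ⟨b, hb, hbmem⟩ := prel_symm G (prep_rel G ⟨P, hP⟩)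
      rw [← hQ] at hbmem
      have haPQ : aa P Q = b := overlap_eq_phase G ψ hψ hb hbmem
      refine ⟨hP, ?_, ?_, ?_⟩
      · rw [hQ]; exact (prep G ⟨P, hP⟩).2
      · rw [haPQ]; exact hb
      · rw [haPQ]; exact hbmem
    · have hsplit : ∀ P Q : Fin N → Fin 4,
          cc P Q • (pauliOp P - aa P Q • pauliOp Q)
            = cc P Q • pauliOp P - (cc P Q * aa P Q) • pauliOp Q := by
        intro P Q; rw [smul_sub, smul_smul]
      calc H = ∑ P : Fin N → Fin 4, co P • pauliOp P := hexp
        _ = (∑ P : Fin N → Fin 4, ∑ Q : Fin N → Fin 4, cc P Q • pauliOp P)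
            - ∑ P : Fin N → Fin 4, ∑ Q : Fin N → Fin 4, (cc P Q * aa P Q) • pauliOp Q := by
            have h1 : ∀ P : Fin N → Fin 4,
                (∑ Q : Fin N → Fin 4, cc P Q • pauliOp P) = co P • pauliOp P := by
              intro P
              rw [← Finset.sum_smul]
              congr 1
              by_cases hP : P = (fun _ => 0)
              · rw [Finset.sum_eq_zero fun Q _ => by simp [hcc, hP]]
                rw [hP, hco0]
              · calc ∑ Q : Fin N → Fin 4, cc P Q
                    = ∑ Q : Fin N → Fin 4,
                        if Q = (prep G ⟨P, hP⟩).1 then co P else 0 :=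
                      Finset.sum_congr rfl fun Q _ => by simp [hcc, hP]
                  _ = co P := by rw [Finset.sum_ite_eq' Finset.univ]; simp
            have h2 : ∀ Q : Fin N → Fin 4,
                (∑ P : Fin N → Fin 4, cc P Q * aa P Q) = 0 := by
              intro Q
              by_cases hQ0 : Q = (fun _ => 0)
              · refine Finset.sum_eq_zero fun P _ => ?_
                by_cases hP : P = (fun _ => 0)
                · simp [hcc, hP]
                · have : Q ≠ (prep G ⟨P, hP⟩).1 := by
                    rw [hQ0]; exact fun h => (prep G ⟨P, hP⟩).2 h.symm
                  simp [hcc, hP, this]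
              · by_cases hrepQ : prep G ⟨Q, hQ0⟩ = ⟨Q, hQ0⟩
                · calc ∑ P : Fin N → Fin 4, cc P Q * aa P Q
                      = ∑ P : Fin N → Fin 4, co P * aa P Q := by
                        refine Finset.sum_congr rfl fun P _ => ?_
                        by_cases hP : P = (fun _ => 0)
                        · have : co P = 0 := by rw [hP]; exact hco0
                          simp [hcc, hP, this, hco0]
                        by_cases hQr : Q = (prep G ⟨P, hP⟩).1
                        · simp [hcc, hP, hQr]
                        · have haz : aa P Q = 0 := by
                            by_contra hne
                            obtain ⟨b, hb, hmem⟩ := overlap_ne_zero G ψ hψ hne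
                            have hrel : prel G ⟨P, hP⟩ ⟨Q, hQ0⟩ := ⟨b, hb, hmem⟩
                            have := prep_eq_of_rel G hrel
                            rw [hrepQ] at this
                            exact hQr (by rw [this])
                          simp [hcc, hP, hQr, haz]
                    _ = 0 := class_sum_zero G ψ hψ H hH0 Q
                · refine Finset.sum_eq_zero fun P _ => ?_
                  by_cases hP : P = (fun _ => 0)
                  · simp [hcc, hP]
                  · by_cases hQr : Q = (prep G ⟨P, hP⟩).1
                    · exfalso
                      apply hrepQ
                      have hsub : (⟨Q, hQ0⟩ : {f : Fin N → Fin 4 // f ≠ fun _ => 0})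
                          = prep G ⟨P, hP⟩ := Subtype.ext hQr
                      rw [hsub, prep_idem]
                    · simp [hcc, hP, hQr]
            rw [Finset.sum_congr rfl fun P (_ : P ∈ Finset.univ) => h1 P]
            have h3 : ∑ P : Fin N → Fin 4, ∑ Q : Fin N → Fin 4,
                (cc P Q * aa P Q) • pauliOp Q = 0 := by
              rw [Finset.sum_comm]
              refine Finset.sum_eq_zero fun Q _ => ?_
              rw [← Finset.sum_smul, h2 Q, zero_smul]
            rw [h3, sub_zero]
        _ = ∑ P : Fin N → Fin 4, ∑ Q : Fin N → Fin 4,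
              cc P Q • (pauliOp P - aa P Q • pauliOp Q) := by
            rw [← Finset.sum_sub_distrib]
            refine Finset.sum_congr rfl fun P _ => ?_
            rw [← Finset.sum_sub_distrib]
            exact Finset.sum_congr rfl fun Q _ => (hsplit P Q).symm
  · rintro ⟨a, c, hcond, rfl⟩
    rw [_root_.sum_mulVec]
    refine Finset.sum_eq_zero fun P _ => ?_
    rw [_root_.sum_mulVec]
    refine Finset.sum_eq_zero fun Q _ => ?_
    by_cases hc : c P Q = 0
    · rw [hc, zero_smul, Matrix.zero_mulVec]
    obtain ⟨hP, hQ, hph, hmem⟩ := hcond P Q hc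
    have hgψ := hψ.1 _ hmem
    have h1 : a P Q • (pauliOp P * pauliOp Q).mulVec ψ = ψ := by
      rw [← Matrix.smul_mulVec]; exact hgψ
    have h2 : (pauliOp P).mulVec ψ = a P Q • (pauliOp Q).mulVec ψ := by
      have h3 := congrArg (fun v => (pauliOp P).mulVec v) h1
      rw [Matrix.mulVec_smul, ← Matrix.mulVec_mulVec, Matrix.mulVec_mulVec (M := pauliOp P),
        pauliOp_sq, Matrix.one_mulVec] at h3
      exact h3.symm
    rw [Matrix.smul_mulVec, Matrix.sub_mulVec, Matrix.smul_mulVec, h2]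
    simp
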